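/- arXiv:1810.06291 — 3 statements merged into one kernel-verified Lean document; each statement's English description precedes it below -/
import Mathlib

section
/- Suppose P is a stochastically transitive distribution on S_n and C = (C_1,...,C_K) is a bucket order agreeing with Kemeny consensus, i.e., i ≺_C j implies p_{j,i} ≤ 1/2. Then L*_P = L*_{P_C} + Λ_P(C), where L*_Q = Σ_{i<j} min(q_{i,j}, 1 − q_{i,j}) for a stochastically transitive distribution Q with pairwise marginals q_{i,j}, P_C is the bucket distribution having the same intra-bucket pairwise marginals as P and q_{j,i} = 0 for i ≺_C j, and Λ_P(C) = Σ_{i ≺_C j} p_{j,i}. -/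
open Finset
open scoped Classical

/-- Pairwise marginal `p_{i,j} = P(σ(i) < σ(j))`. -/
def pairwiseMarginal {n : ℕ} (P : Equiv.Perm (Fin n) → ℝ) (i j : Fin n) : ℝ :=
  ∑ σ : Equiv.Perm (Fin n), if σ i < σ j then P σ else 0

lemma marg_add {n : ℕ} (P : Equiv.Perm (Fin n) → ℝ)
    (hP1 : ∑ σ : Equiv.Perm (Fin n), P σ = 1) {i j : Fin n} (hij : i ≠ j) :
    pairwiseMarginal P i j + pairwiseMarginal P j i = 1 := by
  unfold pairwiseMarginal
  rw [← Finset.sum_add_distrib, ← hP1]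
  refine Finset.sum_congr rfl fun σ _ => ?_
  have h : σ i ≠ σ j := fun h => hij (σ.injective h)
  rcases h.lt_or_gt with h | h
  · simp [h, h.not_gt]
  · simp [h, h.not_gt]

/-- If `P` is stochastically transitive and the bucket order `C` (encoded by
the bucket assignment `b`) agrees with Kemeny consensus (`i ≺_C j ⇒ p_{j,i} ≤ 1/2`),
then `L*_P = L*_{P_C} + Λ_P(C)`, where the bucket distribution `P_C` has
pairwise marginals `q_{i,j} = p_{i,j}` within buckets and `q_{j,i} = 0` for
`i ≺_C j`, `L*_Q = Σ_{i<j} min(q_{i,j}, 1-q_{i,j})` and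
`Λ_P(C) = Σ_{i≺_C j} p_{j,i}`. -/
theorem dispersion_decomposition {n K : ℕ} (P : Equiv.Perm (Fin n) → ℝ)
    (hP0 : ∀ σ, 0 ≤ P σ) (hP1 : ∑ σ : Equiv.Perm (Fin n), P σ = 1)
    (hST : ∀ i j k : Fin n, 1 / 2 ≤ pairwiseMarginal P i j →
      1 / 2 ≤ pairwiseMarginal P j k → 1 / 2 ≤ pairwiseMarginal P i k)
    (b : Fin n → Fin K) (hb : Function.Surjective b)
    (hagree : ∀ i j : Fin n, b i < b j → pairwiseMarginal P j i ≤ 1 / 2)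
    (q : Fin n → Fin n → ℝ)
    (hq : ∀ i j : Fin n, q i j =
      if b i = b j then pairwiseMarginal P i j
      else if b i < b j then 1 else 0) :
    ∑ p ∈ Finset.univ.filter (fun p : Fin n × Fin n => p.1 < p.2),
        min (pairwiseMarginal P p.1 p.2) (1 - pairwiseMarginal P p.1 p.2) =
      (∑ p ∈ Finset.univ.filter (fun p : Fin n × Fin n => p.1 < p.2),
        min (q p.1 p.2) (1 - q p.1 p.2)) +
      ∑ p ∈ Finset.univ.filter (fun p : Fin n × Fin n => b p.1 < b p.2),
        pairwiseMarginal P p.2 p.1 := by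
  have hΛ : (∑ p ∈ Finset.univ.filter (fun p : Fin n × Fin n => b p.1 < b p.2),
        pairwiseMarginal P p.2 p.1)
      = ∑ p ∈ Finset.univ.filter (fun p : Fin n × Fin n => p.1 < p.2),
          ((if b p.1 < b p.2 then pairwiseMarginal P p.2 p.1 else 0)
           + (if b p.2 < b p.1 then pairwiseMarginal P p.1 p.2 else 0)) := by
    rw [Finset.sum_add_distrib, ← Finset.sum_filter, ← Finset.sum_filter,
      Finset.filter_filter, Finset.filter_filter]
    have hsplit := Finset.sum_filter_add_sum_filter_not
      (Finset.univ.filter (fun p : Fin n × Fin n => b p.1 < b p.2))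
      (fun p : Fin n × Fin n => p.1 < p.2)
      (fun p : Fin n × Fin n => pairwiseMarginal P p.2 p.1)
    rw [← hsplit]
    congr 1
    · rw [Finset.filter_filter]
      apply Finset.sum_congr
      · ext p; simp [and_comm]
      · intros; rfl
    · rw [Finset.filter_filter]
      refine Finset.sum_nbij' (fun p : Fin n × Fin n => (p.2, p.1))
        (fun p : Fin n × Fin n => (p.2, p.1)) ?_ ?_
        (fun _ _ => rfl) (fun _ _ => rfl) (fun _ _ => rfl)
      · intro p hp
        simp only [mem_filter, mem_univ, true_and] at hp ⊢
        have hne : p.2 ≠ p.1 := fun h => hp.1.ne (congrArg b h.symm)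
        exact ⟨lt_of_le_of_ne (not_lt.mp hp.2) hne, hp.1⟩
      · intro p hp
        simp only [mem_filter, mem_univ, true_and] at hp ⊢
        exact ⟨hp.2, not_lt.mpr hp.1.le⟩
  rw [hΛ, ← Finset.sum_add_distrib]
  refine Finset.sum_congr rfl fun p hp => ?_
  simp only [mem_filter, mem_univ, true_and] at hp
  have hne : p.1 ≠ p.2 := hp.ne
  have hm := marg_add P hP1 hne
  rw [hq]
  rcases lt_trichotomy (b p.1) (b p.2) with hb12 | hb12 | hb12
  · have h1 : pairwiseMarginal P p.2 p.1 ≤ 1 / 2 := hagree _ _ hb12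
    have h2 : 1 - pairwiseMarginal P p.1 p.2 = pairwiseMarginal P p.2 p.1 := by linarith
    rw [if_neg hb12.ne, if_pos hb12, if_pos hb12, if_neg (asymm hb12)]
    rw [h2, min_eq_right (by linarith)]
    norm_num
  · rw [if_pos hb12, if_neg (hb12 ▸ lt_irrefl _), if_neg (hb12 ▸ lt_irrefl _)]
    ring
  · have h1 : pairwiseMarginal P p.1 p.2 ≤ 1 / 2 := hagree _ _ hb12
    rw [if_neg hb12.ne', if_neg (asymm hb12), if_neg (asymm hb12), if_pos hb12]
    rw [min_eq_left (by linarith)]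
    norm_num
end

section
/- Let P be a strongly and strictly stochastically transitive distribution on S_n with unique Kemeny median σ*_P, and fix a bucket size K and shape λ = (λ_1,...,λ_K) with Σλ_k = n. Then the unique minimizer of Λ_P(C) = Σ_{i≺_C j} p_{j,i} over all bucket orders of shape λ is C*^{(K,λ)} with buckets C*_k = { i : Σ_{l<k} λ_l < σ*_P(i) ≤ Σ_{l≤k} λ_l }. -/
open Finset
open scoped Classical

/-- Copeland/Kemeny rank: `σ*_P(i) = 1 + #{j ≠ i : p_{i,j} < 1/2}`. -/
noncomputable def copelandRank {n : ℕ} (P : Equiv.Perm (Fin n) → ℝ)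
    (i : Fin n) : ℕ :=
  1 + (Finset.univ.filter (fun j => j ≠ i ∧ pairwiseMarginal P i j < 1 / 2)).card

/-- Distortion `Λ_P(C) = Σ_{i ≺_C j} p_{j,i}` of the bucket order encoded by `b`. -/
noncomputable def distortion {n K : ℕ} (P : Equiv.Perm (Fin n) → ℝ)
    (b : Fin n → Fin K) : ℝ :=
  ∑ p ∈ Finset.univ.filter (fun p : Fin n × Fin n => b p.1 < b p.2),
    pairwiseMarginal P p.2 p.1

/-- The bucket order encoded by `b` has shape `lam`. -/
def HasShape {n K : ℕ} (b : Fin n → Fin K) (lam : Fin K → ℕ) : Prop :=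
  ∀ k, (Finset.univ.filter (fun i => b i = k)).card = lam k

section helper
variable {n K : ℕ} {P : Equiv.Perm (Fin n) → ℝ}

-- shape is preserved by precomposition with an equiv
lemma hasShape_comp_equiv {b : Fin n → Fin K} {lam : Fin K → ℕ}
    (hs : HasShape b lam) (e : Equiv.Perm (Fin n)) :
    HasShape (fun x => b (e x)) lam := by
  intro k
  rw [← hs k]
  exact Finset.card_equiv e (by simp)

-- counting fibers
lemma shape_count {b : Fin n → Fin K} {lam : Fin K → ℕ}
    (hs : HasShape b lam) (T : Finset (Fin K)) :
    (Finset.univ.filter (fun x => b x ∈ T)).card = ∑ l ∈ T, lam l := by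
  rw [Finset.card_eq_sum_card_fiberwise (f := b) (t := T)
    (s := Finset.univ.filter (fun x => b x ∈ T))
    (fun x hx => (Finset.mem_filter.mp (Finset.mem_coe.mp hx)).2)]
  refine Finset.sum_congr rfl fun l hl => ?_
  rw [← hs l]
  congr 1
  ext x
  simp only [Finset.mem_filter, Finset.mem_univ, true_and]
  exact ⟨fun h => h.2, fun h => ⟨h ▸ hl, h⟩⟩

-- existence of a map of a given shape
lemma exists_hasShape (lam : Fin K → ℕ) (hsum : ∑ k, lam k = n) :
    ∃ b : Fin n → Fin K, HasShape b lam := by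
  have hcard : Fintype.card (Σ k : Fin K, Fin (lam k)) = n := by
    simp [hsum]
  let e : (Σ k : Fin K, Fin (lam k)) ≃ Fin n := Fintype.equivFinOfCardEq hcard
  refine ⟨fun x => (e.symm x).1, fun k => ?_⟩
  have h1 : (Finset.univ.filter (fun x : Fin n => (e.symm x).1 = k)).card
      = (Finset.univ.filter (fun s : Σ k' : Fin K, Fin (lam k') => s.1 = k)).card :=
    Finset.card_equiv e.symm (by simp)
  rw [h1, ← Fintype.card_subtype]
  have e2 : {s : Σ k' : Fin K, Fin (lam k') // s.1 = k} ≃ Fin (lam k) :=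
    { toFun := fun s => Fin.cast (congrArg lam s.2) s.1.2
      invFun := fun a => ⟨⟨k, a⟩, rfl⟩
      left_inv := by rintro ⟨⟨k', a⟩, h⟩; subst h; rfl
      right_inv := fun a => rfl }
  rw [Fintype.card_congr e2, Fintype.card_fin]

end helper

lemma pm_self' {n : ℕ} (P : Equiv.Perm (Fin n) → ℝ) (i : Fin n) :
    pairwiseMarginal P i i = 0 := by simp [pairwiseMarginal]

lemma pm_add' {n : ℕ} {P : Equiv.Perm (Fin n) → ℝ}
    (hP1 : ∑ σ : Equiv.Perm (Fin n), P σ = 1) {i j : Fin n} (h : i ≠ j) :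
    pairwiseMarginal P i j + pairwiseMarginal P j i = 1 := by
  unfold pairwiseMarginal
  rw [← Finset.sum_add_distrib, ← hP1]
  refine Finset.sum_congr rfl fun σ _ => ?_
  have hne : σ i ≠ σ j := fun e => h (σ.injective e)
  rcases hne.lt_or_gt with h1 | h1 <;> simp [h1, asymm h1]


lemma ite_aux1 {A B : Prop} [Decidable A] [Decidable B] {a a' : ℝ}
    (hBA : B → A) (haa : a' ≤ a) :
    0 ≤ ((if A then a else 0) - (if B then a else 0))
      + ((if B then a' else 0) - (if A then a' else 0)) := by
  by_cases hA : A <;> by_cases hB : B <;>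
    simp [hA, hB] <;> first | linarith | exact absurd (hBA hB) hA

lemma ite_aux2 {A B : Prop} [Decidable A] [Decidable B] {a a' : ℝ}
    (hAB : A → B) (haa : a ≤ a') :
    0 ≤ ((if A then a else 0) - (if B then a else 0))
      + ((if B then a' else 0) - (if A then a' else 0)) := by
  by_cases hA : A <;> by_cases hB : B <;>
    simp [hA, hB] <;> first | linarith | exact absurd (hAB hA) hB

lemma distortion_swap_lt {n K : ℕ} {P : Equiv.Perm (Fin n) → ℝ}
    (hP1 : ∑ σ : Equiv.Perm (Fin n), P σ = 1)
    (hSST : ∀ i j k : Fin n, i ≠ j → k ≠ i → k ≠ j →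
      1 / 2 ≤ pairwiseMarginal P i j →
      pairwiseMarginal P j k ≤ pairwiseMarginal P i k)
    {b : Fin n → Fin K} {i j : Fin n}
    (hij : 1 / 2 < pairwiseMarginal P i j) (hb : b j < b i) :
    distortion P (fun x => b (Equiv.swap i j x)) < distortion P b := by
  classical
  have hne : i ≠ j := by rintro rfl; rw [pm_self'] at hij; norm_num at hij
  have hji : pairwiseMarginal P j i < 1 / 2 := by
    have := pm_add' hP1 hne; linarith
  have h1 : ∀ k, k ≠ i → k ≠ j →
      pairwiseMarginal P j k ≤ pairwiseMarginal P i k :=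
    fun k hki hkj => hSST i j k hne hki hkj hij.le
  have h2 : ∀ k, k ≠ i → k ≠ j →
      pairwiseMarginal P k i ≤ pairwiseMarginal P k j := by
    intro k hki hkj
    have a1 := pm_add' hP1 hki
    have a2 := pm_add' hP1 hkj
    have := h1 k hki hkj; linarith
  set F : Fin n × Fin n → ℝ := fun p =>
    (if b p.1 < b p.2 then pairwiseMarginal P p.2 p.1 else 0)
    - (if b (Equiv.swap i j p.1) < b (Equiv.swap i j p.2)
        then pairwiseMarginal P p.2 p.1 else 0) with hF
  have hsum : distortion P b - distortion P (fun x => b (Equiv.swap i j x))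
      = ∑ p : Fin n × Fin n, F p := by
    unfold distortion
    rw [Finset.sum_filter, Finset.sum_filter, ← Finset.sum_sub_distrib]
  have hre : ∑ p : Fin n × Fin n, F (Equiv.swap i j p.1, Equiv.swap i j p.2)
      = ∑ p : Fin n × Fin n, F p := by
    exact Fintype.sum_equiv
      (Equiv.prodCongr (Equiv.swap i j) (Equiv.swap i j))
      (fun p => F (Equiv.swap i j p.1, Equiv.swap i j p.2)) F (fun p => rfl)
  have hkey : 0 < ∑ p : Fin n × Fin n,
      (F p + F (Equiv.swap i j p.1, Equiv.swap i j p.2)) := by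
    apply Finset.sum_pos'
    · rintro ⟨x, y⟩ -
      simp only [hF, Equiv.swap_apply_self]
      rcases eq_or_ne x i with hxi | hxi
      · rw [hxi]
        rcases eq_or_ne y i with hyi | hyi
        · rw [hyi]; simp [pm_self']
        · rcases eq_or_ne y j with hyj | hyj
          · rw [hyj]
            simp only [Equiv.swap_apply_left, Equiv.swap_apply_right]
            simp [hb, asymm hb]; linarith
          · simp only [Equiv.swap_apply_left,
              Equiv.swap_apply_of_ne_of_ne hyi hyj]
            exact ite_aux2 (fun h => hb.trans h) (h2 y hyi hyj)
      · rcases eq_or_ne x j with hxj | hxj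
        · rw [hxj]
          rcases eq_or_ne y i with hyi | hyi
          · rw [hyi]
            simp only [Equiv.swap_apply_left, Equiv.swap_apply_right]
            simp [hb, asymm hb]; linarith
          · rcases eq_or_ne y j with hyj | hyj
            · rw [hyj]; simp [pm_self']
            · simp only [Equiv.swap_apply_right,
                Equiv.swap_apply_of_ne_of_ne hyi hyj]
              exact ite_aux1 (fun h => hb.trans h) (h2 y hyi hyj)
        · rcases eq_or_ne y i with hyi | hyi
          · rw [hyi]
            simp only [Equiv.swap_apply_left,
              Equiv.swap_apply_of_ne_of_ne hxi hxj]
            exact ite_aux1 (fun h => h.trans hb) (h1 x hxi hxj)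
          · rcases eq_or_ne y j with hyj | hyj
            · rw [hyj]
              simp only [Equiv.swap_apply_right,
                Equiv.swap_apply_of_ne_of_ne hxi hxj]
              exact ite_aux2 (fun h => h.trans hb) (h1 x hxi hxj)
            · simp [Equiv.swap_apply_of_ne_of_ne hxi hxj,
                Equiv.swap_apply_of_ne_of_ne hyi hyj]
    · refine ⟨(j, i), Finset.mem_univ _, ?_⟩
      simp only [hF, Equiv.swap_apply_self, Equiv.swap_apply_left,
        Equiv.swap_apply_right]
      simp [hb, asymm hb]; linarith
  rw [Finset.sum_add_distrib, hre, ← two_mul, ← hsum] at hkey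
  linarith


lemma char_lemma {n K : ℕ} {P : Equiv.Perm (Fin n) → ℝ}
    (hP1 : ∑ σ : Equiv.Perm (Fin n), P σ = 1)
    (hstrict : ∀ i j : Fin n, i ≠ j → pairwiseMarginal P i j ≠ 1 / 2)
    {b : Fin n → Fin K} {lam : Fin K → ℕ} (hs : HasShape b lam)
    (hm : ∀ i j, 1 / 2 < pairwiseMarginal P i j → b i ≤ b j)
    (i : Fin n) (k : Fin K) (hik : b i = k) :
    (∑ l ∈ Finset.univ.filter (fun l => l < k), lam l) < copelandRank P i ∧
    copelandRank P i ≤ ∑ l ∈ Finset.univ.filter (fun l => l ≤ k), lam l := by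
  classical
  set S := Finset.univ.filter
    (fun j => j ≠ i ∧ pairwiseMarginal P i j < 1 / 2) with hS
  have hrank : copelandRank P i = 1 + S.card := rfl
  constructor
  · have hsub2 : Finset.univ.filter
        (fun x => b x ∈ Finset.univ.filter (fun l => l < k)) ⊆ S := by
      intro x hx
      simp only [Finset.mem_filter, Finset.mem_univ, true_and] at hx
      have hbx : b x < k := hx
      have hxi : x ≠ i := fun h => by
        rw [h, hik] at hbx; exact lt_irrefl _ hbx
      simp only [hS, Finset.mem_filter, Finset.mem_univ, true_and]
      refine ⟨hxi, ?_⟩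
      by_contra hge
      push_neg at hge
      have hlt : 1 / 2 < pairwiseMarginal P i x :=
        lt_of_le_of_ne hge ((hstrict i x (Ne.symm hxi)).symm)
      have := hm i x hlt
      rw [hik] at this
      exact absurd hbx (not_lt.mpr this)
    have h2 := Finset.card_le_card hsub2
    rw [shape_count hs] at h2
    rw [hrank]
    omega
  · have hsub : insert i S ⊆ Finset.univ.filter
        (fun x => b x ∈ Finset.univ.filter (fun l => l ≤ k)) := by
      intro x hx
      simp only [Finset.mem_insert] at hx
      simp only [Finset.mem_filter, Finset.mem_univ, true_and]
      rcases hx with h | hx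
      · rw [h]; exact le_of_eq hik
      · obtain ⟨hxne, hxq⟩ := (Finset.mem_filter.mp hx).2
        have hadd := pm_add' hP1 (Ne.symm hxne)
        have hq : 1 / 2 < pairwiseMarginal P x i := by linarith
        exact hik ▸ hm x i hq
    have hcard := Finset.card_le_card hsub
    rw [Finset.card_insert_of_notMem (by simp [hS]),
      shape_count hs] at hcard
    rw [hrank]
    omega

lemma interval_unique {K : ℕ} (lam : Fin K → ℕ) (r : ℕ) (k1 k2 : Fin K)
    (h1 : (∑ l ∈ Finset.univ.filter (fun l => l < k1), lam l) < r)
    (h2 : r ≤ ∑ l ∈ Finset.univ.filter (fun l => l ≤ k1), lam l)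
    (h3 : (∑ l ∈ Finset.univ.filter (fun l => l < k2), lam l) < r)
    (h4 : r ≤ ∑ l ∈ Finset.univ.filter (fun l => l ≤ k2), lam l) :
    k1 = k2 := by
  by_contra hne
  rcases Ne.lt_or_gt hne with h | h
  · have : (∑ l ∈ Finset.univ.filter (fun l => l ≤ k1), lam l)
        ≤ ∑ l ∈ Finset.univ.filter (fun l => l < k2), lam l :=
      Finset.sum_le_sum_of_subset (fun l hl => by
        simp only [Finset.mem_filter, Finset.mem_univ, true_and] at hl ⊢
        exact lt_of_le_of_lt hl h)
    omega
  · have : (∑ l ∈ Finset.univ.filter (fun l => l ≤ k2), lam l)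
        ≤ ∑ l ∈ Finset.univ.filter (fun l => l < k1), lam l :=
      Finset.sum_le_sum_of_subset (fun l hl => by
        simp only [Finset.mem_filter, Finset.mem_univ, true_and] at hl ⊢
        exact lt_of_le_of_lt hl h)
    omega


/-- If `P` is strongly and strictly stochastically transitive, then for any
bucket size `K` and shape `λ`, the minimizer of `Λ_P(C)` over bucket orders of
shape `λ` is unique, and it is the segmentation of the Copeland/Kemeny ranking:
its `k`-th bucket is `{ i : Σ_{l<k} λ_l < σ*_P(i) ≤ Σ_{l≤k} λ_l }`. -/
theorem unique_optimal_bucket_order {n K : ℕ} (P : Equiv.Perm (Fin n) → ℝ)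
    (hP0 : ∀ σ, 0 ≤ P σ) (hP1 : ∑ σ : Equiv.Perm (Fin n), P σ = 1)
    (hSST : ∀ i j k : Fin n, i ≠ j → k ≠ i → k ≠ j →
      1 / 2 ≤ pairwiseMarginal P i j →
      pairwiseMarginal P j k ≤ pairwiseMarginal P i k)
    (hstrict : ∀ i j : Fin n, i ≠ j → pairwiseMarginal P i j ≠ 1 / 2)
    (lam : Fin K → ℕ) (hlam : ∀ k, 1 ≤ lam k) (hsum : ∑ k, lam k = n) :
    (∃! b : Fin n → Fin K, HasShape b lam ∧
      ∀ b' : Fin n → Fin K, HasShape b' lam → distortion P b ≤ distortion P b') ∧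
    (∀ b : Fin n → Fin K, HasShape b lam →
      (∀ b' : Fin n → Fin K, HasShape b' lam →
        distortion P b ≤ distortion P b') →
      ∀ i k, b i = k →
        (∑ l ∈ Finset.univ.filter (fun l => l < k), lam l) < copelandRank P i ∧
        copelandRank P i ≤ ∑ l ∈ Finset.univ.filter (fun l => l ≤ k), lam l) := by
  classical
  -- exchange/monotonicity for minimizers
  have hshape_swap : ∀ (b : Fin n → Fin K) (i j : Fin n), HasShape b lam →
      HasShape (fun x => b (Equiv.swap i j x)) lam :=
    fun b i j hs => hasShape_comp_equiv hs (Equiv.swap i j)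
  have hmono : ∀ b : Fin n → Fin K, HasShape b lam →
      (∀ b' : Fin n → Fin K, HasShape b' lam →
        distortion P b ≤ distortion P b') →
      ∀ i j, 1 / 2 < pairwiseMarginal P i j → b i ≤ b j := by
    intro b hs hmin i j hij
    by_contra h
    push_neg at h
    have hlt := distortion_swap_lt hP1 hSST hij h
    exact absurd (hmin _ (hshape_swap b i j hs)) (not_le.mpr hlt)
  -- existence of a minimizer
  obtain ⟨b1, hb1⟩ := exists_hasShape lam hsum
  have hne : (Finset.univ.filter
      (fun b : Fin n → Fin K => HasShape b lam)).Nonempty :=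
    ⟨b1, by simp [hb1]⟩
  obtain ⟨b0, hb0mem, hb0min⟩ :=
    Finset.exists_min_image _ (distortion P) hne
  have hb0s : HasShape b0 lam := (Finset.mem_filter.mp hb0mem).2
  have hb0min' : ∀ b' : Fin n → Fin K, HasShape b' lam →
      distortion P b0 ≤ distortion P b' := fun b' h =>
    hb0min b' (by simp [h])
  have huniq : ∀ b : Fin n → Fin K, HasShape b lam →
      (∀ b' : Fin n → Fin K, HasShape b' lam →
        distortion P b ≤ distortion P b') → b = b0 := by
    intro b hbs hbmin
    funext i
    have c1 := char_lemma hP1 hstrict hbs (hmono b hbs hbmin) i (b i) rfl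
    have c2 := char_lemma hP1 hstrict hb0s (hmono b0 hb0s hb0min') i (b0 i) rfl
    exact interval_unique lam (copelandRank P i) (b i) (b0 i)
      c1.1 c1.2 c2.1 c2.2
  refine ⟨⟨b0, ⟨hb0s, hb0min'⟩, fun b' hb' => huniq b' hb'.1 hb'.2⟩, ?_⟩
  intro b hbs hbmin i k hik
  exact char_lemma hP1 hstrict hbs (hmono b hbs hbmin) i k hik
end

section
/- Let P be a strongly/strictly stochastically transitive bucket distribution on S_n with K* and λ* as above. Then for any bucket order C with P ∈ 𝐏_C and C ≠ C*^{(K*,λ*)}, the dimension d_C = Π_k (#C_k)! − 1 satisfies d_C > d_{C*^{(K*,λ*)}}. -/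
open Finset
open scoped Classical

/-- `P` belongs to `𝐏_C` for the bucket order encoded by `b`. -/
def MemBucketClass {n K : ℕ} (P : Equiv.Perm (Fin n) → ℝ)
    (b : Fin n → Fin K) : Prop :=
  ∀ i j, b i < b j → pairwiseMarginal P j i = 0

/-- Dimension `d_C = Π_k (#C_k)! - 1` of the class of bucket distributions
associated to the bucket order encoded by `b`. -/
def bucketDim {n K : ℕ} (b : Fin n → Fin K) : ℕ :=
  (∏ k : Fin K, ((Finset.univ.filter (fun i => b i = k)).card).factorial) - 1

private lemma pm_add_eq_one {n : ℕ} (P : Equiv.Perm (Fin n) → ℝ)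
    (hP1 : ∑ σ : Equiv.Perm (Fin n), P σ = 1) {i j : Fin n} (h : i ≠ j) :
    pairwiseMarginal P i j + pairwiseMarginal P j i = 1 := by
  unfold pairwiseMarginal
  rw [← Finset.sum_add_distrib, ← hP1]
  refine Finset.sum_congr rfl fun σ _ => ?_
  have hne : σ i ≠ σ j := fun h' => h (σ.injective h')
  rcases hne.lt_or_gt with h1 | h1
  · rw [if_pos h1, if_neg (asymm h1), add_zero]
  · rw [if_neg (asymm h1), if_pos h1, zero_add]

private lemma fact_mul_fact_lt {a c : ℕ} (ha : 1 ≤ a) (hc : 1 ≤ c) :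
    a.factorial * c.factorial < (a + c).factorial := by
  induction c with
  | zero => omega
  | succ c ih =>
    rcases Nat.eq_zero_or_pos c with rfl | hc'
    · have : a.factorial < (a + 1).factorial :=
        (Nat.factorial_lt ha).mpr (Nat.lt_succ_self a)
      simpa [Nat.factorial] using this
    · have h := ih hc'
      calc a.factorial * (c + 1).factorial
          = (c + 1) * (a.factorial * c.factorial) := by
            rw [Nat.factorial_succ]; ring
        _ < (c + 1) * (a + c).factorial :=
            mul_lt_mul_of_pos_left h (by omega)
        _ ≤ (a + c + 1) * (a + c).factorial :=
            Nat.mul_le_mul_right _ (by omega)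
        _ = (a + (c + 1)).factorial := by
            rw [show a + (c + 1) = (a + c) + 1 by ring, Nat.factorial_succ]

/-- Any bucket order whose class contains `P` is constant on the buckets of a
maximal bucket order (otherwise the common refinement would be a strictly
bigger valid bucket order). -/
private lemma coarsen {n Kstar : ℕ} (P : Equiv.Perm (Fin n) → ℝ)
    (Kstar_max : ∀ K' ∈ {K : ℕ | ∃ b : Fin n → Fin K,
      Function.Surjective b ∧ MemBucketClass P b}, K' ≤ Kstar)
    (bstar : Fin n → Fin Kstar) (hbstar_surj : Function.Surjective bstar)
    (hbstar_mem : MemBucketClass P bstar)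
    {K : ℕ} (b : Fin n → Fin K) (hbmem : MemBucketClass P b) :
    ∀ i j, bstar i = bstar j → b i = b j := by
  by_contra hcon
  push_neg at hcon
  obtain ⟨i, j, hbsij, hbij⟩ := hcon
  have hKpos : 0 < K := (b i).pos
  set f : Fin n → ℕ := fun x => (bstar x : ℕ) * K + (b x : ℕ) with hf
  have hfx : ∀ x, f x = (bstar x : ℕ) * K + (b x : ℕ) := fun x => rfl
  have hdiv : ∀ x, f x / K = (bstar x : ℕ) := by
    intro x
    rw [hf]
    simp only
    rw [mul_comm, Nat.mul_add_div hKpos, Nat.div_eq_of_lt (b x).2, add_zero]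
  have hfmono : ∀ x y, bstar x < bstar y → f x < f y := by
    intro x y hxy
    have h1 : (bstar x : ℕ) + 1 ≤ (bstar y : ℕ) := hxy
    calc (bstar x : ℕ) * K + (b x : ℕ)
        < (bstar x : ℕ) * K + K := by
          exact Nat.add_lt_add_left (b x).2 _
      _ = ((bstar x : ℕ) + 1) * K := by ring
      _ ≤ (bstar y : ℕ) * K := Nat.mul_le_mul_right K h1
      _ ≤ f y := Nat.le_add_right _ _
  have hflt : ∀ x y, f x < f y → pairwiseMarginal P y x = 0 := by
    intro x y hxy
    rcases lt_trichotomy (bstar x) (bstar y) with h | h | h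
    · exact hbstar_mem x y h
    · have hc : (bstar x : ℕ) = (bstar y : ℕ) := congrArg Fin.val h
      have : (b x : ℕ) < (b y : ℕ) := by
        have h2 := hxy
        rw [hfx x, hfx y, hc] at h2
        omega
      exact hbmem x y this
    · exact absurd (hfmono y x h) (Nat.lt_asymm hxy)
  -- the image of f, with its order, is a valid bucket order with more buckets
  set T : Finset ℕ := Finset.image f Finset.univ with hT
  have hmemT : ∀ x, f x ∈ T := fun x => Finset.mem_image_of_mem f (Finset.mem_univ x)
  set e := T.orderIsoOfFin rfl with he
  set b3 : Fin n → Fin T.card := fun x => e.symm ⟨f x, hmemT x⟩ with hb3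
  have hb3lt : ∀ x y, b3 x < b3 y ↔ f x < f y := by
    intro x y
    rw [hb3]
    simp only
    rw [e.symm.lt_iff_lt, Subtype.mk_lt_mk]
  have hb3surj : Function.Surjective b3 := by
    intro t
    have hmem : ((e t : {x // x ∈ T}) : ℕ) ∈ Finset.image f Finset.univ := (e t).2
    obtain ⟨x, _, hx⟩ := Finset.mem_image.mp hmem
    refine ⟨x, ?_⟩
    calc b3 x = e.symm ⟨f x, hmemT x⟩ := rfl
      _ = e.symm (e t) := congrArg e.symm (Subtype.ext hx)
      _ = t := e.symm_apply_apply t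
  have hb3mem : MemBucketClass P b3 := fun x y hxy => hflt x y ((hb3lt x y).mp hxy)
  have hcard_le : T.card ≤ Kstar := Kstar_max T.card ⟨b3, hb3surj, hb3mem⟩
  -- but T.card > Kstar
  have himg : T.image (· / K) = Finset.univ.image (fun x => (bstar x : ℕ)) := by
    rw [hT, Finset.image_image]
    exact Finset.image_congr fun x _ => hdiv x
  have hcard_img : (T.image (· / K)).card = Kstar := by
    rw [himg]
    have : Finset.univ.image (fun x => (bstar x : ℕ))
        = (Finset.univ.image bstar).image Fin.val := by
      rw [Finset.image_image]; rfl
    rw [this, Finset.image_univ_of_surjective hbstar_surj,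
      Finset.card_image_of_injective _ Fin.val_injective, Finset.card_univ,
      Fintype.card_fin]
  have hKeq : T.card = Kstar := le_antisymm hcard_le (hcard_img ▸ Finset.card_image_le)
  have hinj : Set.InjOn (· / K) ↑T :=
    Finset.card_image_iff.mp (by rw [hcard_img, hKeq])
  have hfij : f i ≠ f j := by
    intro hfeq
    apply hbij
    have hc : (bstar i : ℕ) = (bstar j : ℕ) := congrArg Fin.val hbsij
    rw [hfx i, hfx j, hc] at hfeq
    exact Fin.val_injective (by omega)
  exact hfij (hinj (Finset.mem_coe.mpr (hmemT i)) (Finset.mem_coe.mpr (hmemT j))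
    (show f i / K = f j / K by rw [hdiv i, hdiv j, hbsij]))

/-- Let `P` be a strongly/strictly stochastically transitive bucket
distribution, `K*` the maximal size of a bucket order whose class contains
`P`, and `b*` such a maximal bucket order.  Then any bucket order `C` with
`P ∈ 𝐏_C` which differs from `C*^{(K*,λ*)}` (i.e. induces a different strict
order `≺`) has strictly larger dimension `d_C > d_{C*}`. -/
theorem maximal_bucket_order_min_dim {n : ℕ} (P : Equiv.Perm (Fin n) → ℝ)
    (hP0 : ∀ σ, 0 ≤ P σ) (hP1 : ∑ σ : Equiv.Perm (Fin n), P σ = 1)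
    (hSST : ∀ i j k : Fin n, i ≠ j → k ≠ i → k ≠ j →
      1 / 2 ≤ pairwiseMarginal P i j →
      pairwiseMarginal P j k ≤ pairwiseMarginal P i k)
    (hstrict : ∀ i j : Fin n, i ≠ j → pairwiseMarginal P i j ≠ 1 / 2)
    (Kstar : ℕ) (hK2 : 2 ≤ Kstar)
    (hmax : IsGreatest {K : ℕ | ∃ b : Fin n → Fin K,
      Function.Surjective b ∧ MemBucketClass P b} Kstar)
    (bstar : Fin n → Fin Kstar) (hbstar_surj : Function.Surjective bstar)
    (hbstar_mem : MemBucketClass P bstar) :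
    ∀ (K : ℕ) (b : Fin n → Fin K), Function.Surjective b →
      MemBucketClass P b →
      ¬(∀ i j : Fin n, b i < b j ↔ bstar i < bstar j) →
      bucketDim bstar < bucketDim b := by
  intro K b hbsurj hbmem hdiff
  have hcoarse : ∀ i j, bstar i = bstar j → b i = b j :=
    coarsen P (fun K' hK' => hmax.2 hK') bstar hbstar_surj hbstar_mem b hbmem
  -- build the quotient map g with b = g ∘ bstar
  set g : Fin Kstar → Fin K := fun k => b (hbstar_surj k).choose with hg
  have hgb : ∀ i, b i = g (bstar i) := by
    intro i
    rw [hg]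
    exact hcoarse i _ ((hbstar_surj (bstar i)).choose_spec).symm
  have hgmono : Monotone g := by
    intro k k' hkk'
    rcases eq_or_lt_of_le hkk' with rfl | hlt
    · exact le_rfl
    by_contra hgt
    push_neg at hgt
    set x := (hbstar_surj k).choose with hx
    set x' := (hbstar_surj k').choose with hx'
    have hbx : bstar x = k := (hbstar_surj k).choose_spec
    have hbx' : bstar x' = k' := (hbstar_surj k').choose_spec
    have hxx' : x ≠ x' := by
      intro h
      exact (ne_of_lt hlt) (by rw [← hbx, ← hbx', h])
    have h1 : pairwiseMarginal P x' x = 0 := hbstar_mem x x' (by rw [hbx, hbx']; exact hlt)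
    have h2 : pairwiseMarginal P x x' = 0 := hbmem x' x hgt
    have := pm_add_eq_one P hP1 hxx'
    rw [h1, h2] at this
    norm_num at this
  have hgsurj : Function.Surjective g := by
    intro t
    obtain ⟨i, hi⟩ := hbsurj t
    exact ⟨bstar i, by rw [← hgb, hi]⟩
  -- g is not injective (otherwise the orders would coincide)
  have hgnotinj : ¬ Function.Injective g := by
    intro hinj
    apply hdiff
    have hsm : StrictMono g := hgmono.strictMono_of_injective hinj
    intro i j
    rw [hgb i, hgb j, hsm.lt_iff_lt]
  -- sizes
  set s : Fin Kstar → ℕ := fun k => (Finset.univ.filter (fun i => bstar i = k)).card with hs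
  set m : Fin K → ℕ := fun t => (Finset.univ.filter (fun i => b i = t)).card with hm
  have hspos : ∀ k, 1 ≤ s k := by
    intro k
    obtain ⟨i, hi⟩ := hbstar_surj k
    rw [hs]
    exact Finset.card_pos.mpr ⟨i, Finset.mem_filter.mpr ⟨Finset.mem_univ i, hi⟩⟩
  have hmsum : ∀ t, m t = ∑ k ∈ Finset.univ.filter (fun k => g k = t), s k := by
    intro t
    rw [hm]
    simp only
    rw [Finset.card_eq_sum_card_fiberwise
      (f := bstar) (t := Finset.univ.filter (fun k => g k = t))
      (fun i hi => by
        rw [Finset.mem_coe, Finset.mem_filter] at hi ⊢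
        exact ⟨Finset.mem_univ _, by rw [← hi.2, hgb]⟩)]
    refine Finset.sum_congr rfl fun k hk => ?_
    rw [Finset.mem_filter] at hk
    congr 1
    rw [Finset.filter_filter]
    refine Finset.filter_congr fun i _ => ?_
    constructor
    · exact fun h => h.2
    · intro h
      exact ⟨by rw [hgb, h, hk.2], h⟩
  -- per-fiber factorial inequality
  have hfib_le : ∀ t : Fin K,
      ∏ k ∈ Finset.univ.filter (fun k => g k = t), (s k).factorial
        ≤ (m t).factorial := by
    intro t
    rw [hmsum t]
    exact Nat.le_of_dvd (Nat.factorial_pos _)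
      (Nat.prod_factorial_dvd_factorial_sum _ _)
  -- strict inequality at a merged fiber
  obtain ⟨k1, k2, hg12, hk12⟩ : ∃ k1 k2, g k1 = g k2 ∧ k1 ≠ k2 := by
    by_contra hc
    push_neg at hc
    exact hgnotinj fun a b h => hc a b h
  set t0 := g k1 with ht0
  have hk1mem : k1 ∈ Finset.univ.filter (fun k => g k = t0) :=
    Finset.mem_filter.mpr ⟨Finset.mem_univ _, rfl⟩
  have hk2mem : k2 ∈ (Finset.univ.filter (fun k => g k = t0)).erase k1 :=
    Finset.mem_erase.mpr ⟨hk12.symm, Finset.mem_filter.mpr ⟨Finset.mem_univ _, hg12.symm⟩⟩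
  have hfib_lt :
      ∏ k ∈ Finset.univ.filter (fun k => g k = t0), (s k).factorial
        < (m t0).factorial := by
    set F := Finset.univ.filter (fun k => g k = t0) with hF
    set A := ∑ k ∈ F.erase k1, s k with hA
    have hA1 : 1 ≤ A := le_trans (hspos k2) (Finset.single_le_sum (fun _ _ => Nat.zero_le _) hk2mem)
    have hsum : s k1 + A = ∑ k ∈ F, s k := Finset.add_sum_erase F s hk1mem
    calc ∏ k ∈ F, (s k).factorial
        = (s k1).factorial * ∏ k ∈ F.erase k1, (s k).factorial :=
          (Finset.mul_prod_erase F _ hk1mem).symm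
      _ ≤ (s k1).factorial * A.factorial :=
          Nat.mul_le_mul_left _ (Nat.le_of_dvd (Nat.factorial_pos _)
            (Nat.prod_factorial_dvd_factorial_sum _ _))
      _ < (s k1 + A).factorial := fact_mul_fact_lt (hspos k1) hA1
      _ = (m t0).factorial := by rw [hsum, hmsum t0]
  -- combine over all t
  have hprod_lt : ∏ k : Fin Kstar, (s k).factorial < ∏ t : Fin K, (m t).factorial := by
    rw [← Finset.prod_fiberwise_of_maps_to (g := g) (t := Finset.univ)
      (fun i _ => Finset.mem_univ (g i)) (fun k => (s k).factorial)]
    have hpos : ∀ t : Fin K,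
        0 < ∏ k ∈ Finset.univ.filter (fun k => g k = t), (s k).factorial :=
      fun t => Finset.prod_pos fun k _ => Nat.factorial_pos _
    calc ∏ t : Fin K, ∏ k ∈ Finset.univ.filter (fun k => g k = t), (s k).factorial
        = (∏ k ∈ Finset.univ.filter (fun k => g k = t0), (s k).factorial) *
            ∏ t ∈ Finset.univ.erase t0,
              ∏ k ∈ Finset.univ.filter (fun k => g k = t), (s k).factorial :=
          (Finset.mul_prod_erase Finset.univ
            (fun t => ∏ k ∈ Finset.univ.filter (fun k => g k = t), (s k).factorial)
            (Finset.mem_univ t0)).symm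
      _ ≤ (∏ k ∈ Finset.univ.filter (fun k => g k = t0), (s k).factorial) *
            ∏ t ∈ Finset.univ.erase t0, (m t).factorial :=
          Nat.mul_le_mul_left _ (Finset.prod_le_prod
            (fun t _ => Nat.zero_le _) (fun t _ => hfib_le t))
      _ < (m t0).factorial * ∏ t ∈ Finset.univ.erase t0, (m t).factorial :=
          mul_lt_mul_of_pos_right hfib_lt
            (Finset.prod_pos fun t _ => Nat.factorial_pos _)
      _ = ∏ t : Fin K, (m t).factorial :=
          Finset.mul_prod_erase Finset.univ (fun t => (m t).factorial)
            (Finset.mem_univ t0)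
  -- conclude on dimensions
  have h1 : 1 ≤ ∏ k : Fin Kstar, (s k).factorial :=
    Finset.prod_pos fun k _ => Nat.factorial_pos _
  unfold bucketDim
  exact Nat.sub_lt_sub_right h1 hprod_lt
end
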